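/- Let L ≥ K ≥ 1 be integers and let w : [L] → [0, 1] satisfy w(1) ≥ w(2) ≥ … ≥ w(L). Let ŵ, θ, g, h : [L] → ℝ satisfy |ŵ(i) − w(i)| ≤ g(i) and |θ(i) − ŵ(i)| ≤ h(i) for all i ∈ [L], and suppose Σ_{k=1}^K [∏_{j=1}^{k−1} (1 − w(j))] · θ(k) ≥ Σ_{k=1}^K [∏_{j=1}^{k−1} (1 − w(j))] · w(k). Let S = (i_1, …, i_K) be distinct items with θ(i_1) ≥ θ(i_2) ≥ … ≥ θ(i_K) ≥ θ(j) for every j ∉ {i_1, …, i_K}. Then Σ_{k=1}^K [∏_{j=1}^{k−1} (1 − w(i_j))] · (g(i_k) + h(i_k)) ≥ r(S* | w) − r(S | w), where S* = (1, …, K). -/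

import Mathlib

open Finset in
lemma aux_abel (Q D : ℕ → ℝ) (hQmono : ∀ k, Q (k + 1) ≤ Q k) :
    ∀ n, (∀ m ≤ n, 0 ≤ ∑ k ∈ range m, D k) →
      Q n * (∑ k ∈ range n, D k) ≤ ∑ k ∈ range n, Q k * D k := by
  intro n
  induction n with
  | zero => simp
  | succ n ih =>
    intro hD
    have h1 := ih (fun m hm => hD m (by omega))
    have h2 : Q (n + 1) * (∑ k ∈ range (n + 1), D k) ≤ Q n * (∑ k ∈ range (n + 1), D k) :=
      mul_le_mul_of_nonneg_right (hQmono n) (hD (n + 1) le_rfl)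
    rw [sum_range_succ (f := D), sum_range_succ]
    calc Q (n + 1) * (∑ k ∈ range n, D k + D n)
        ≤ Q n * (∑ k ∈ range n, D k + D n) := by
          rw [sum_range_succ (f := D)] at h2; exact h2
      _ = Q n * (∑ k ∈ range n, D k) + Q n * D n := by ring
      _ ≤ ∑ k ∈ range n, Q k * D k + Q n * D n := by linarith

open Finset in
lemma aux_sum_top {L : ℕ} (θ : Fin L → ℝ) (s t : Finset (Fin L)) (hcard : s.card = t.card)
    (htop : ∀ x ∈ t, ∀ y ∉ t, θ y ≤ θ x) : ∑ y ∈ s, θ y ≤ ∑ x ∈ t, θ x := by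
  have hc : (s \ t).card = (t \ s).card := by
    have h1 := Finset.card_inter_add_card_sdiff s t
    have h2 := Finset.card_inter_add_card_sdiff t s
    rw [Finset.inter_comm] at h2
    omega
  have e : (s \ t : Finset (Fin L)) ≃ (t \ s : Finset (Fin L)) :=
    Finset.equivOfCardEq (by simpa using hc)
  have key : ∑ y ∈ s \ t, θ y ≤ ∑ x ∈ t \ s, θ x := by
    rw [← Finset.sum_coe_sort (s \ t), ← Finset.sum_coe_sort (t \ s)]
    rw [← Equiv.sum_comp e (fun x : (t \ s : Finset (Fin L)) => θ x)]
    apply Finset.sum_le_sum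
    intro y _
    have hy : (y : Fin L) ∉ t := (Finset.mem_sdiff.mp y.2).2
    have hx : ((e y : Fin L)) ∈ t := (Finset.mem_sdiff.mp (e y).2).1
    exact htop _ hx _ hy
  have h1 : ∑ y ∈ s, θ y = ∑ y ∈ s ∩ t, θ y + ∑ y ∈ s \ t, θ y :=
    (Finset.sum_inter_add_sum_sdiff s t θ).symm
  have h2 : ∑ x ∈ t, θ x = ∑ x ∈ s ∩ t, θ x + ∑ x ∈ t \ s, θ x := by
    rw [Finset.inter_comm]
    exact (Finset.sum_inter_add_sum_sdiff t s θ).symm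
  linarith

open Finset in
lemma aux_prod_top {L : ℕ} (w : Fin L → ℝ) (hw01 : ∀ j, 0 ≤ w j ∧ w j ≤ 1)
    (hmono : ∀ a b : Fin L, a ≤ b → w b ≤ w a) :
    ∀ (n : ℕ) (s : Finset (Fin L)), s.card = n →
      ∏ j ∈ range n, (if h : j < L then 1 - w ⟨j, h⟩ else 1) ≤ ∏ x ∈ s, (1 - w x) := by
  intro n
  induction n with
  | zero => intro s hs; simp [Finset.card_eq_zero.mp hs]
  | succ n ih =>
    intro s hs
    have hne : s.Nonempty := Finset.card_pos.mp (by omega)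
    set m := s.max' hne with hm
    have hsub : s ⊆ Finset.Iic m := fun x hx => Finset.mem_Iic.mpr (Finset.le_max' s x hx)
    have hcard : s.card ≤ (m : ℕ) + 1 := by
      calc s.card ≤ (Finset.Iic m).card := Finset.card_le_card hsub
        _ = (m : ℕ) + 1 := by rw [Fin.card_Iic]
    have hnm : n ≤ (m : ℕ) := by omega
    have hnL : n < L := lt_of_le_of_lt hnm m.isLt
    have hIH := ih (s.erase m) (by rw [Finset.card_erase_of_mem (s.max'_mem hne)]; omega)
    have hfac : (1 : ℝ) - w ⟨n, hnL⟩ ≤ 1 - w m := by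
      have : w m ≤ w ⟨n, hnL⟩ := hmono _ _ (by simp [Fin.le_def, hnm])
      linarith
    have hwm : (0:ℝ) ≤ 1 - w m := by have := hw01 m; linarith
    calc ∏ j ∈ range (n+1), (if h : j < L then 1 - w ⟨j, h⟩ else 1)
        = (∏ j ∈ range n, (if h : j < L then 1 - w ⟨j, h⟩ else 1)) *
            (if h : n < L then 1 - w ⟨n, h⟩ else 1) := prod_range_succ _ n
      _ ≤ (∏ x ∈ s.erase m, (1 - w x)) * (1 - w m) := by
          rw [dif_pos hnL]
          apply mul_le_mul hIH hfac (by have := hw01 ⟨n, hnL⟩; linarith)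
          exact Finset.prod_nonneg (fun x _ => by have := hw01 x; linarith)
      _ = ∏ x ∈ s, (1 - w x) := Finset.prod_erase_mul s _ (s.max'_mem hne)

lemma fin_prod_Iio {K : ℕ} (f : ℕ → ℝ) (k : Fin K) :
    ∏ j ∈ Finset.Iio k, f (j : ℕ) = ∏ j ∈ Finset.range (k : ℕ), f j := by
  rw [← Nat.Iio_eq_range, ← Fin.map_valEmbedding_Iio, Finset.prod_map]
  rfl

open Finset in
lemma aux_sum_prefix (x : ℕ → ℝ) : ∀ n, ∑ k ∈ range n, (∏ j ∈ range k, (1 - x j)) * x k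
    = 1 - ∏ k ∈ range n, (1 - x k) := by
  intro n
  induction n with
  | zero => simp
  | succ n ih => rw [sum_range_succ, prod_range_succ, ih]; ring

/-- (Key deterministic step of Lemma transfer-one for TS-Cascade.)
Items are `Fin L`, sorted so that `w` is nonincreasing; `S* = (0, …, K-1)` (the top `K` items).
If the empirical means `ŵ` and Thompson samples `θ` are within `g` resp. `h` of `w`, and the
weighted Thompson samples of the optimal items dominate the corresponding weighted means
(inequality (2) of the paper), then the list `S = (i 0, …, i (K-1))` chosen greedily according to
`θ` satisfies `F(S) ≥ r(S* | w) - r(S | w)`. -/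
theorem stmt_3 (L K : ℕ) (hK : 1 ≤ K) (hKL : K ≤ L)
    (w : Fin L → ℝ) (hw01 : ∀ j, 0 ≤ w j ∧ w j ≤ 1)
    (hmono : ∀ a b : Fin L, a ≤ b → w b ≤ w a)
    (wHat θ g h : Fin L → ℝ)
    (hg : ∀ j, |wHat j - w j| ≤ g j) (hh : ∀ j, |θ j - wHat j| ≤ h j)
    (hcrucial :
      ∑ k : Fin K, (∏ j ∈ Finset.Iio k, (1 - w (Fin.castLE hKL j))) * w (Fin.castLE hKL k)
      ≤ ∑ k : Fin K, (∏ j ∈ Finset.Iio k, (1 - w (Fin.castLE hKL j))) * θ (Fin.castLE hKL k))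
    (i : Fin K → Fin L) (hi : Function.Injective i)
    (hsort : ∀ k l : Fin K, k ≤ l → θ (i l) ≤ θ (i k))
    (htop : ∀ j : Fin L, j ∉ Set.range i → θ j ≤ θ (i ⟨K - 1, by omega⟩)) :
    (1 - ∏ k : Fin K, (1 - w (Fin.castLE hKL k))) - (1 - ∏ k : Fin K, (1 - w (i k)))
      ≤ ∑ k : Fin K, (∏ j ∈ Finset.Iio k, (1 - w (i j))) * (g (i k) + h (i k)) := by
  classical
  set wa : ℕ → ℝ := fun k => if hk : k < L then w ⟨k, hk⟩ else 0 with hwa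
  set wb : ℕ → ℝ := fun k => if hk : k < K then w (i ⟨k, hk⟩) else 0 with hwb
  set t : ℕ → ℝ := fun k => if hk : k < K then θ (i ⟨k, hk⟩) else 0 with ht
  set u : ℕ → ℝ := fun k => if hk : k < K then θ (Fin.castLE hKL ⟨k, hk⟩) else 0 with hu
  set c : ℕ → ℝ := fun k => if hk : k < K then g (i ⟨k, hk⟩) + h (i ⟨k, hk⟩) else 0 with hc
  set Q : ℕ → ℝ := fun k => ∏ j ∈ Finset.range k, (1 - wa j) with hQ
  set P : ℕ → ℝ := fun k => ∏ j ∈ Finset.range k, (1 - wb j) with hP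
  -- basic bounds
  have hwa01 : ∀ k, 0 ≤ wa k ∧ wa k ≤ 1 := by
    intro k; simp only [hwa]; split
    · exact hw01 _
    · norm_num
  have hwb01 : ∀ k, 0 ≤ wb k ∧ wb k ≤ 1 := by
    intro k; simp only [hwb]; split
    · exact hw01 _
    · norm_num
  have hQnn : ∀ k, 0 ≤ Q k := fun k =>
    Finset.prod_nonneg fun j _ => by have := hwa01 j; linarith [this.2]
  have hPnn : ∀ k, 0 ≤ P k := fun k =>
    Finset.prod_nonneg fun j _ => by have := hwb01 j; linarith [this.2]
  have hQmono : ∀ k, Q (k + 1) ≤ Q k := by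
    intro k
    have : Q (k + 1) = Q k * (1 - wa k) := Finset.prod_range_succ _ k
    rw [this]
    have h1 := (hwa01 k).1
    nlinarith [hQnn k]
  -- conversion of hypothesis and goal sums to ℕ-indexed sums
  have hQfin : ∀ k : Fin K, (∏ j ∈ Finset.Iio k, (1 - w (Fin.castLE hKL j))) = Q (k : ℕ) := by
    intro k
    rw [show Q (k:ℕ) = ∏ j ∈ Finset.range (k:ℕ), (1 - wa j) from rfl,
        ← fin_prod_Iio (fun j => 1 - wa j) k]
    apply Finset.prod_congr rfl
    intro j _
    have hj : (j : ℕ) < L := lt_of_lt_of_le j.isLt hKL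
    simp only [hwa, dif_pos hj]
    rfl
  have hPfin : ∀ k : Fin K, (∏ j ∈ Finset.Iio k, (1 - w (i j))) = P (k : ℕ) := by
    intro k
    rw [show P (k:ℕ) = ∏ j ∈ Finset.range (k:ℕ), (1 - wb j) from rfl,
        ← fin_prod_Iio (fun j => 1 - wb j) k]
    apply Finset.prod_congr rfl
    intro j _
    simp only [hwb, dif_pos j.isLt]
  have hcru : ∑ k ∈ Finset.range K, Q k * wa k ≤ ∑ k ∈ Finset.range K, Q k * u k := by
    rw [← Fin.sum_univ_eq_sum_range (fun k => Q k * wa k) K,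
        ← Fin.sum_univ_eq_sum_range (fun k => Q k * u k) K]
    have e1 : ∀ k : Fin K, Q (k : ℕ) * wa (k : ℕ)
        = (∏ j ∈ Finset.Iio k, (1 - w (Fin.castLE hKL j))) * w (Fin.castLE hKL k) := by
      intro k
      rw [hQfin k]
      congr 1
      simp only [hwa, dif_pos (lt_of_lt_of_le k.isLt hKL)]
      rfl
    have e2 : ∀ k : Fin K, Q (k : ℕ) * u (k : ℕ)
        = (∏ j ∈ Finset.Iio k, (1 - w (Fin.castLE hKL j))) * θ (Fin.castLE hKL k) := by
      intro k
      rw [hQfin k]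
      congr 1
      simp only [hu, dif_pos k.isLt]
    rw [Finset.sum_congr rfl fun k _ => e1 k, Finset.sum_congr rfl fun k _ => e2 k]
    exact hcrucial
  -- P dominates Q
  have hPQ : ∀ k, k ≤ K → Q k ≤ P k := by
    intro k hkK
    set emb : Fin k → Fin L := fun j => i ⟨j.val, lt_of_lt_of_le j.isLt hkK⟩ with hemb
    have hembinj : Function.Injective emb := by
      intro x y hxy
      have h1 := hi hxy
      rw [Fin.mk_eq_mk] at h1
      exact Fin.ext h1
    have hs : (Finset.image emb Finset.univ).card = k := by
      rw [Finset.card_image_of_injective _ hembinj, Finset.card_univ, Fintype.card_fin]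
    have h1 := aux_prod_top w hw01 hmono k (Finset.image emb Finset.univ) hs
    have hL : ∏ j ∈ Finset.range k, (if hj : j < L then 1 - w ⟨j, hj⟩ else 1) = Q k := by
      apply Finset.prod_congr rfl
      intro j hj
      have hjk : j < k := Finset.mem_range.mp hj
      have hjL : j < L := by omega
      rw [dif_pos hjL]
      simp only [hwa, dif_pos hjL]
    have hR : ∏ x ∈ Finset.image emb Finset.univ, (1 - w x) = P k := by
      rw [Finset.prod_image (fun x _ y _ hxy => hembinj hxy)]
      rw [show P k = ∏ j ∈ Finset.range k, (1 - wb j) from rfl,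
          ← Fin.prod_univ_eq_prod_range (fun j => 1 - wb j) k]
      apply Finset.prod_congr rfl
      intro j _
      simp only [hwb, dif_pos (lt_of_lt_of_le j.isLt hkK)]
      rfl
    rw [hL, hR] at h1
    exact h1
  -- partial sums of t dominate partial sums of u
  have hD : ∀ m, m ≤ K → 0 ≤ ∑ k ∈ Finset.range m, (t k - u k) := by
    intro m hm
    rw [Finset.sum_sub_distrib, sub_nonneg]
    set f : Fin m → Fin L := fun j => Fin.castLE hKL ⟨j.val, lt_of_lt_of_le j.isLt hm⟩ with hf
    set e : Fin m → Fin L := fun j => i ⟨j.val, lt_of_lt_of_le j.isLt hm⟩ with he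
    have hfinj : Function.Injective f := by
      intro x y hxy
      have h1 := Fin.castLE_injective hKL hxy
      rw [Fin.mk_eq_mk] at h1
      exact Fin.ext h1
    have heinj : Function.Injective e := by
      intro x y hxy
      have h1 := hi hxy
      rw [Fin.mk_eq_mk] at h1
      exact Fin.ext h1
    have hcards : (Finset.image f Finset.univ).card = (Finset.image e Finset.univ).card := by
      rw [Finset.card_image_of_injective _ hfinj, Finset.card_image_of_injective _ heinj]
    have htopset : ∀ x ∈ Finset.image e Finset.univ, ∀ y ∉ Finset.image e Finset.univ,
        θ y ≤ θ x := by
      intro x hx y hy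
      obtain ⟨j, -, rfl⟩ := Finset.mem_image.mp hx
      by_cases hyr : y ∈ Set.range i
      · obtain ⟨l, rfl⟩ := hyr
        have hlm : ¬ ((l : ℕ) < m) := by
          intro hlm
          apply hy
          apply Finset.mem_image.mpr ⟨⟨(l : ℕ), hlm⟩, Finset.mem_univ _, ?_⟩
          show i ⟨(l : ℕ), _⟩ = i l
          congr 1
        exact hsort ⟨(j : ℕ), lt_of_lt_of_le j.isLt hm⟩ l (by simp [Fin.le_def]; omega)
      · have h1 := htop y hyr
        have h2 : θ (i ⟨K - 1, by omega⟩) ≤ θ (i ⟨(j : ℕ), lt_of_lt_of_le j.isLt hm⟩) := by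
          apply hsort
          simp only [Fin.le_def]
          omega
        linarith
    have hmain := aux_sum_top θ _ _ hcards htopset
    have hsum_f : ∑ y ∈ Finset.image f Finset.univ, θ y = ∑ k ∈ Finset.range m, u k := by
      rw [Finset.sum_image (fun x _ y _ hxy => hfinj hxy),
          ← Fin.sum_univ_eq_sum_range (fun k => u k) m]
      apply Finset.sum_congr rfl
      intro j _
      simp only [hu, dif_pos (lt_of_lt_of_le j.isLt hm)]
      rfl
    have hsum_e : ∑ y ∈ Finset.image e Finset.univ, θ y = ∑ k ∈ Finset.range m, t k := by
      rw [Finset.sum_image (fun x _ y _ hxy => heinj hxy),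
          ← Fin.sum_univ_eq_sum_range (fun k => t k) m]
      apply Finset.sum_congr rfl
      intro j _
      simp only [ht, dif_pos (lt_of_lt_of_le j.isLt hm)]
      rfl
    rw [hsum_f, hsum_e] at hmain
    exact hmain
  -- Abel: ∑ Q u ≤ ∑ Q t
  have habel : ∑ k ∈ Finset.range K, Q k * u k ≤ ∑ k ∈ Finset.range K, Q k * t k := by
    have h0 := aux_abel Q (fun k => t k - u k) hQmono K (fun m hm => hD m hm)
    have h1 : 0 ≤ Q K * ∑ k ∈ Finset.range K, (t k - u k) := mul_nonneg (hQnn K) (hD K le_rfl)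
    have h2 : ∑ k ∈ Finset.range K, Q k * (t k - u k)
        = ∑ k ∈ Finset.range K, Q k * t k - ∑ k ∈ Finset.range K, Q k * u k := by
      rw [← Finset.sum_sub_distrib]
      exact Finset.sum_congr rfl fun k _ => by ring
    rw [h2] at h0
    linarith
  -- ∑ Q t ≤ ∑ P max(t,0)
  have h34 : ∑ k ∈ Finset.range K, Q k * t k ≤ ∑ k ∈ Finset.range K, P k * max (t k) 0 := by
    apply Finset.sum_le_sum
    intro k hk
    calc Q k * t k ≤ Q k * max (t k) 0 := mul_le_mul_of_nonneg_left (le_max_left _ _) (hQnn k)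
      _ ≤ P k * max (t k) 0 :=
        mul_le_mul_of_nonneg_right (hPQ k (le_of_lt (Finset.mem_range.mp hk))) (le_max_right _ _)
  -- ∑ P max(t,0) ≤ ∑ P (wb + c)
  have h56 : ∑ k ∈ Finset.range K, P k * max (t k) 0
      ≤ ∑ k ∈ Finset.range K, P k * (wb k + c k) := by
    apply Finset.sum_le_sum
    intro k hk
    have hkK := Finset.mem_range.mp hk
    apply mul_le_mul_of_nonneg_left _ (hPnn k)
    simp only [ht, hwb, hc, dif_pos hkK]
    set x := i ⟨k, hkK⟩ with hx
    have h1 := hg x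
    have h2 := hh x
    have h3 : θ x - w x ≤ g x + h x := by
      calc θ x - w x ≤ |θ x - w x| := le_abs_self _
        _ = |(θ x - wHat x) + (wHat x - w x)| := by ring_nf
        _ ≤ |θ x - wHat x| + |wHat x - w x| := abs_add_le _ _
        _ ≤ g x + h x := by linarith
    have h4 : 0 ≤ g x := le_trans (abs_nonneg _) h1
    have h5 : 0 ≤ h x := le_trans (abs_nonneg _) h2
    have h6 := hw01 x
    apply max_le <;> linarith
  -- sum identities
  have hidA : ∑ k ∈ Finset.range K, Q k * wa k = 1 - ∏ k ∈ Finset.range K, (1 - wa k) :=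
    aux_sum_prefix wa K
  have hidB : ∑ k ∈ Finset.range K, P k * wb k = 1 - ∏ k ∈ Finset.range K, (1 - wb k) :=
    aux_sum_prefix wb K
  -- goal conversion
  have gA : ∏ k : Fin K, (1 - w (Fin.castLE hKL k)) = ∏ k ∈ Finset.range K, (1 - wa k) := by
    rw [← Fin.prod_univ_eq_prod_range (fun k => 1 - wa k) K]
    apply Finset.prod_congr rfl
    intro k _
    simp only [hwa, dif_pos (lt_of_lt_of_le k.isLt hKL)]
    rfl
  have gB : ∏ k : Fin K, (1 - w (i k)) = ∏ k ∈ Finset.range K, (1 - wb k) := by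
    rw [← Fin.prod_univ_eq_prod_range (fun k => 1 - wb k) K]
    apply Finset.prod_congr rfl
    intro k _
    simp only [hwb, dif_pos k.isLt]
  have gC : ∑ k : Fin K, (∏ j ∈ Finset.Iio k, (1 - w (i j))) * (g (i k) + h (i k))
      = ∑ k ∈ Finset.range K, P k * c k := by
    rw [← Fin.sum_univ_eq_sum_range (fun k => P k * c k) K]
    apply Finset.sum_congr rfl
    intro k _
    rw [hPfin k]
    congr 1
    simp only [hc, dif_pos k.isLt]
  rw [gA, gB, gC]
  have hsplit : ∑ k ∈ Finset.range K, P k * (wb k + c k)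
      = ∑ k ∈ Finset.range K, P k * wb k + ∑ k ∈ Finset.range K, P k * c k := by
    rw [← Finset.sum_add_distrib]
    exact Finset.sum_congr rfl fun k _ => by ring
  linarith
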